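/- Let G be a simple graph in which every edge lies in a 3-clique, and suppose G is 2-robustly 3-colourable. Then C(G) is 2-robustly 1-in-3 satisfiable in the following sense: for any two distinct variables (i,j) and (i',j') of C(G) and any Boolean values b, b' such that it is not the case that b = b' = true and the two variables occur together in some clause of C(G), there is an assignment ν that 1-in-3 satisfies C(G) with ν(i,j) = b and ν(i',j') = b'. (Two distinct variables (i,j) and (i',j') occur together in a clause of C(G) iff i = i', or j = j' and i is adjacent to i' in G.) -/

import Mathlib

/-- Exactly one of three Boolean values is `true`. -/
def oneOf3 (a b c : Bool) : Prop :=
  (a = true ∧ b = false ∧ c = false) ∨ (a = false ∧ b = true ∧ c = false) ∨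
  (a = false ∧ b = false ∧ c = true)

/-- `ν` 1-in-3 satisfies the monotone 1-in-3 instance `C(G)`. -/
def CSat {V : Type} (G : SimpleGraph V) (ν : V × Fin 3 → Bool) : Prop :=
  (∀ i : V, oneOf3 (ν (i, 0)) (ν (i, 1)) (ν (i, 2))) ∧
  (∀ i₁ i₂ i₃ : V, G.Adj i₁ i₂ → G.Adj i₁ i₃ → G.Adj i₂ i₃ →
    ∀ j : Fin 3, oneOf3 (ν (i₁, j)) (ν (i₂, j)) (ν (i₃, j)))

lemma ex3 : ∀ a b : Fin 3, ∃ c : Fin 3, c ≠ a ∧ c ≠ b := by decide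

lemma one3 (a b c j : Fin 3) (hab : a ≠ b) (hac : a ≠ c) (hbc : b ≠ c) :
    oneOf3 (decide (a = j)) (decide (b = j)) (decide (c = j)) := by
  fin_cases a <;> fin_cases b <;> fin_cases c <;> fin_cases j <;> simp_all [oneOf3]

lemma csat_of_proper {V : Type} (G : SimpleGraph V) (c : V → Fin 3)
    (hc : ∀ x y, G.Adj x y → c x ≠ c y) :
    CSat G (fun p => decide (c p.1 = p.2)) := by
  constructor
  · intro i
    have h3 : ∀ x : Fin 3, oneOf3 (decide (x = 0)) (decide (x = 1)) (decide (x = 2)) := by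
      simp only [oneOf3]; decide
    exact h3 (c i)
  · intro i₁ i₂ i₃ h12 h13 h23 j
    exact one3 _ _ _ j (hc _ _ h12) (hc _ _ h13) (hc _ _ h23)

/-- Let `G` be a simple graph in which every edge lies in a 3-clique and
which is 2-robustly 3-colourable. Then `C(G)` is 2-robustly 1-in-3 satisfiable: for any
two distinct variables `(i,j)`, `(i',j')` and Boolean values `b`, `b'` which do not assign
`true` to two variables occurring together in a clause (i.e. not both `true` with `i = i'`
or with `j = j'` and `i` adjacent to `i'`), some 1-in-3 satisfying assignment takes these
values. -/
theorem stmt_14 {V : Type} (G : SimpleGraph V)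
    (htri : ∀ u v : V, G.Adj u v → ∃ w : V, G.Adj u w ∧ G.Adj v w)
    (hrob : ∀ u v : V, ∀ cu cv : Fin 3, (u = v → cu = cv) → (G.Adj u v → cu ≠ cv) →
      ∃ c : V → Fin 3, (∀ x y : V, G.Adj x y → c x ≠ c y) ∧ c u = cu ∧ c v = cv) :
    ∀ (i i' : V) (j j' : Fin 3), (i, j) ≠ (i', j') →
      ∀ b b' : Bool,
        ¬(b = true ∧ b' = true ∧ (i = i' ∨ (j = j' ∧ G.Adj i i'))) →
        ∃ ν : V × Fin 3 → Bool, CSat G ν ∧ ν (i, j) = b ∧ ν (i', j') = b' := by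
  intro i i' j j' hne b b' hcon
  cases b <;> cases b'
  · -- false false
    by_cases hii : i = i'
    · subst hii
      obtain ⟨cu, hcu1, hcu2⟩ := ex3 j j'
      obtain ⟨c, hc, hci, _⟩ := hrob i i cu cu (fun _ => rfl) (fun h => absurd h (G.loopless.irrefl i))
      refine ⟨fun p => decide (c p.1 = p.2), csat_of_proper G c hc, ?_, ?_⟩ <;>
        simp [hci, hcu1, hcu2]
    · obtain ⟨cu, hcu1, _⟩ := ex3 j j
      obtain ⟨cv, hcv1, hcv2⟩ := ex3 j' cu
      obtain ⟨c, hc, hci, hci'⟩ := hrob i i' cu cv (fun h => absurd h hii)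
        (fun _ => fun h => hcv2 h.symm)
      refine ⟨fun p => decide (c p.1 = p.2), csat_of_proper G c hc, ?_, ?_⟩ <;>
        simp [hci, hci', hcu1, hcv1]
  · -- false true : need c i ≠ j, c i' = j'
    by_cases hii : i = i'
    · subst hii
      have hjj : j ≠ j' := fun h => hne (by rw [h])
      obtain ⟨c, hc, hci, _⟩ := hrob i i j' j' (fun _ => rfl) (fun h => absurd h (G.loopless.irrefl i))
      refine ⟨fun p => decide (c p.1 = p.2), csat_of_proper G c hc, ?_, ?_⟩ <;>
        simp [hci, Ne.symm hjj]
    · obtain ⟨cu, hcu1, hcu2⟩ := ex3 j j'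
      obtain ⟨c, hc, hci, hci'⟩ := hrob i i' cu j' (fun h => absurd h hii)
        (fun _ => hcu2)
      refine ⟨fun p => decide (c p.1 = p.2), csat_of_proper G c hc, ?_, ?_⟩ <;>
        simp [hci, hci', hcu1]
  · -- true false : need c i = j, c i' ≠ j'
    by_cases hii : i = i'
    · subst hii
      have hjj : j ≠ j' := fun h => hne (by rw [h])
      obtain ⟨c, hc, hci, _⟩ := hrob i i j j (fun _ => rfl) (fun h => absurd h (G.loopless.irrefl i))
      refine ⟨fun p => decide (c p.1 = p.2), csat_of_proper G c hc, ?_, ?_⟩ <;>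
        simp [hci, hjj]
    · obtain ⟨cv, hcv1, hcv2⟩ := ex3 j' j
      obtain ⟨c, hc, hci, hci'⟩ := hrob i i' j cv (fun h => absurd h hii)
        (fun _ => fun h => hcv2 h.symm)
      refine ⟨fun p => decide (c p.1 = p.2), csat_of_proper G c hc, ?_, ?_⟩ <;>
        simp [hci, hci', hcv1]
  · -- true true
    have hii : i ≠ i' := fun h => hcon ⟨rfl, rfl, Or.inl h⟩
    have hja : G.Adj i i' → j ≠ j' := fun ha hj => hcon ⟨rfl, rfl, Or.inr ⟨hj, ha⟩⟩
    obtain ⟨c, hc, hci, hci'⟩ := hrob i i' j j' (fun h => absurd h hii) hja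
    refine ⟨fun p => decide (c p.1 = p.2), csat_of_proper G c hc, ?_, ?_⟩ <;>
      simp [hci, hci']
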